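/- If a finite play v·ρ·v'·ρ' yields hierarchical information with preorder ⪯ (i.e., for all agents a ⪯ b, the information set of a after the play is contained in that of b), then the suffix play v'·ρ' starting at v' also yields hierarchical information with the same preorder ⪯. -/
import Mathlib


/-- Synchronous perfect-recall extension of a relation on positions. -/
def synchPR {V : Type*} (r : V → V → Prop) (ρ ρ' : List V) : Prop :=
  ρ.length = ρ'.length ∧
    ∀ i (h : i < ρ.length) (h' : i < ρ'.length), r (ρ.get ⟨i, h⟩) (ρ'.get ⟨i, h'⟩)

/-- A finite play from `v0` in a CGS with transition function `δ`:
a nonempty word of positions starting at `v0` whose consecutive positions are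
related by some joint move. -/
def isPlay {V Ag Mov : Type*} (δ : V → (Ag → Mov) → V) (v0 : V) (ρ : List V) : Prop :=
  ρ ≠ [] ∧ ρ.head? = some v0 ∧
    ∀ i (h : i + 1 < ρ.length),
      ∃ c : Ag → Mov, δ (ρ.get ⟨i, Nat.lt_of_succ_lt h⟩) c = ρ.get ⟨i + 1, h⟩

/-- Information set of agent `a` after the finite play `ρ` from `v0`. -/
def infoSet {V Ag Mov : Type*} (obs : Ag → V → V → Prop)
    (δ : V → (Ag → Mov) → V) (v0 : V) (a : Ag) (ρ : List V) : Set (List V) :=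
  {ρ' | isPlay δ v0 ρ' ∧ synchPR (obs a) ρ ρ'}

/-- A finite play `ρ` from `v0` yields hierarchical information for preorder `pre`. -/
def yieldsHier {V Ag Mov : Type*} (obs : Ag → V → V → Prop)
    (δ : V → (Ag → Mov) → V) (pre : Ag → Ag → Prop) (v0 : V) (ρ : List V) : Prop :=
  ∀ a b, pre a b → infoSet obs δ v0 a ρ ⊆ infoSet obs δ v0 b ρ

lemma synchPR_append_left {V : Type*} (r : V → V → Prop) (hr : ∀ x, r x x)
    (μ σ τ : List V) (h : synchPR r σ τ) : synchPR r (μ ++ σ) (μ ++ τ) := by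
  obtain ⟨hlen, hrel⟩ := h
  constructor
  · simp [hlen]
  · intro i hi hi'
    simp only [List.get_eq_getElem]
    rcases lt_or_ge i μ.length with hlt | hge
    · rw [List.getElem_append_left hlt, List.getElem_append_left hlt]
      exact hr _
    · rw [List.getElem_append_right hge, List.getElem_append_right hge]
      have h1 : i - μ.length < σ.length := by
        simp at hi; omega
      have h2 : i - μ.length < τ.length := by omega
      exact hrel _ h1 h2

lemma synchPR_append_cancel {V : Type*} (r : V → V → Prop)
    (μ σ τ : List V) (h : synchPR r (μ ++ σ) (μ ++ τ)) : synchPR r σ τ := by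
  obtain ⟨hlen, hrel⟩ := h
  have hl : σ.length = τ.length := by simp at hlen; omega
  refine ⟨hl, fun i hi hi' => ?_⟩
  have h1 : μ.length + i < (μ ++ σ).length := by simp; omega
  have h2 : μ.length + i < (μ ++ τ).length := by simp; omega
  have := hrel (μ.length + i) h1 h2
  simpa [List.getElem_append_right (Nat.le_add_right μ.length i)] using this

lemma isPlay_append {V Ag Mov : Type*} (δ : V → (Ag → Mov) → V)
    (v v' : V) (μ σ π : List V)
    (h1 : isPlay δ v (v :: μ ++ v' :: σ))
    (h2 : isPlay δ v' π)
    (hπlen : π.length = σ.length + 1) :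
    isPlay δ v (v :: μ ++ π) := by
  obtain ⟨-, -, htr1⟩ := h1
  obtain ⟨hne, hhd, htr2⟩ := h2
  -- π is nonempty with head v'
  obtain ⟨πt, rfl⟩ : ∃ πt, π = v' :: πt := by
    cases π with
    | nil => exact absurd rfl hne
    | cons a t =>
      have : a = v' := by simpa using hhd
      exact ⟨t, by rw [this]⟩
  refine ⟨by simp, by simp, ?_⟩
  intro i hi
  set m := (v :: μ)
  have hagree : ∀ j (hj : j ≤ m.length) (hj1 : j < (m ++ v' :: πt).length)
      (hj2 : j < (m ++ v' :: σ).length),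
      (m ++ v' :: πt).get ⟨j, hj1⟩ = (m ++ v' :: σ).get ⟨j, hj2⟩ := by
    intro j hj hj1 hj2
    simp only [List.get_eq_getElem]
    rcases lt_or_ge j m.length with hlt | hge
    · rw [List.getElem_append_left hlt, List.getElem_append_left hlt]
    · have hje : j = m.length := le_antisymm hj hge
      subst hje
      rw [List.getElem_append_right hge, List.getElem_append_right hge]
      simp
  rcases le_or_gt (i + 1) m.length with hle | hgt
  · -- within the prefix (junction included)
    have hi2 : i + 1 < (m ++ v' :: σ).length := by simp at hle ⊢; omega
    obtain ⟨c, hc⟩ := htr1 i hi2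
    refine ⟨c, ?_⟩
    rw [hagree i (Nat.le_of_succ_le hle) _ _, hagree (i+1) hle _ _]
    exact hc
  · -- within π
    have hge : m.length ≤ i := by omega
    have hi2 : (i - m.length) + 1 < (v' :: πt).length := by
      simp at hi ⊢; omega
    obtain ⟨c, hc⟩ := htr2 (i - m.length) hi2
    refine ⟨c, ?_⟩
    simp only [List.get_eq_getElem] at hc ⊢
    rw [List.getElem_append_right hge, List.getElem_append_right (by omega : m.length ≤ i + 1)]
    have e1 : i + 1 - m.length = (i - m.length) + 1 := by omega
    simp only [e1]
    exact hc

/-- if the finite play `v·ρ·v'·ρ'` yields hierarchical information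
with preorder `pre` (from initial position `v`), then the suffix play `v'·ρ'`
yields hierarchical information with the same preorder (from `v'`). -/
theorem suffix_yieldsHier {V Ag Mov : Type*} (obs : Ag → V → V → Prop)
    (hobs : ∀ a, Equivalence (obs a))
    (δ : V → (Ag → Mov) → V) (pre : Ag → Ag → Prop)
    (v v' : V) (ρ ρ' : List V)
    (hplay : isPlay δ v (v :: ρ ++ v' :: ρ'))
    (hhier : yieldsHier obs δ pre v (v :: ρ ++ v' :: ρ')) :
    yieldsHier obs δ pre v' (v' :: ρ') := by
  intro a b hab π hπ
  obtain ⟨hπplay, hπsync⟩ := hπ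
  have hπlen : π.length = ρ'.length + 1 := by
    have := hπsync.1; simpa using this.symm
  have hbigplay : isPlay δ v (v :: ρ ++ π) :=
    isPlay_append δ v v' ρ ρ' π hplay hπplay hπlen
  have hbigsync : synchPR (obs a) ((v :: ρ) ++ v' :: ρ') ((v :: ρ) ++ π) :=
    synchPR_append_left (obs a) (fun x => (hobs a).refl x) _ _ _ hπsync
  have hmem : ((v :: ρ) ++ π) ∈ infoSet obs δ v a (v :: ρ ++ v' :: ρ') :=
    ⟨hbigplay, hbigsync⟩
  obtain ⟨-, hbsync⟩ := hhier a b hab hmem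
  exact ⟨hπplay, synchPR_append_cancel (obs b) (v :: ρ) _ _ hbsync⟩
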